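/- There exists N₀ such that for every finite set A of real numbers with |A| ≥ N₀, there is a subset B ⊆ A of even cardinality |B| = 2T with 2T ≤ 20·log₂|A| such that the set T*B, consisting of all sums of T pairwise distinct elements of B, has cardinality at least |A|. -/

import Mathlib

/-- `T*B` for real numbers: sums of `T` pairwise distinct elements of `B`. -/
def distinctSumR (B : Set ℝ) (T : ℕ) : Set ℝ :=
  {s | ∃ f : Fin T → ℝ, Function.Injective f ∧ (∀ i, f i ∈ B) ∧ s = ∑ i, f i}

namespace SmallSetBigSums

open Finset

/-- The finset of sums of `T`-element subsets of `B`. -/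
noncomputable def sumsT (B : Finset ℝ) (T : ℕ) : Finset ℝ :=
  (B.powersetCard T).image fun C => ∑ x ∈ C, x

lemma mem_sumsT {B : Finset ℝ} {T : ℕ} {s : ℝ} :
    s ∈ sumsT B T ↔ ∃ C : Finset ℝ, C ⊆ B ∧ C.card = T ∧ s = ∑ x ∈ C, x := by
  unfold sumsT
  simp only [mem_image, mem_powersetCard]
  constructor
  · rintro ⟨C, ⟨h1, h2⟩, rfl⟩
    exact ⟨C, h1, h2, rfl⟩
  · rintro ⟨C, h1, h2, rfl⟩
    exact ⟨C, ⟨h1, h2⟩, rfl⟩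

lemma distinctSumR_coe (B : Finset ℝ) (T : ℕ) :
    distinctSumR (↑B) T = ↑(sumsT B T) := by
  ext s
  constructor
  · rintro ⟨f, hf, hmem, rfl⟩
    refine Finset.mem_coe.2 (mem_sumsT.2 ⟨Finset.univ.image f, ?_, ?_, ?_⟩)
    · intro x hx
      obtain ⟨i, _, rfl⟩ := Finset.mem_image.1 hx
      exact Finset.mem_coe.1 (hmem i)
    · rw [Finset.card_image_of_injective _ hf, Finset.card_univ, Fintype.card_fin]
    · rw [Finset.sum_image (fun x _ y _ h => hf h)]
  · intro hs
    obtain ⟨C, hCB, hCcard, rfl⟩ := mem_sumsT.1 (Finset.mem_coe.1 hs)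
    refine ⟨fun i => (C.orderIsoOfFin hCcard i : ℝ), ?_, ?_, ?_⟩
    · intro i j hij
      exact (C.orderIsoOfFin hCcard).injective (Subtype.ext hij)
    · intro i
      exact Finset.mem_coe.2 (hCB (C.orderIsoOfFin hCcard i).2)
    · rw [← Finset.sum_coe_sort C (fun x => x)]
      exact (Fintype.sum_equiv (C.orderIsoOfFin hCcard).toEquiv _ _ (fun i => rfl)).symm

lemma card_shift (S : Finset ℝ) (a : ℝ) : (S.image (· + a)).card = S.card :=
  Finset.card_image_of_injective _ (add_left_injective a)

lemma inter_shift (S : Finset ℝ) (a b : ℝ) :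
    (S.image (· + a)) ∩ (S.image (· + b)) = (S ∩ S.image (· + (a - b))).image (· + b) := by
  ext x
  simp only [mem_inter, mem_image]
  constructor
  · rintro ⟨⟨s, hs, rfl⟩, ⟨u, hu, hux⟩⟩
    refine ⟨u, ⟨hu, ⟨s, hs, by linarith⟩⟩, hux⟩
  · rintro ⟨v, ⟨hv, ⟨w, hw, hwv⟩⟩, rfl⟩
    exact ⟨⟨w, hw, by linarith⟩, ⟨v, hv, rfl⟩⟩

/-- near-period composition inequality -/
lemma comp_lemma (S : Finset ℝ) (δ δ' : ℝ) :
    (S ∩ S.image (· + δ)).card + (S ∩ S.image (· + δ')).card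
      ≤ S.card + (S ∩ S.image (· + (δ + δ'))).card := by
  classical
  set X := S ∩ S.image (· + δ) with hX
  set Y := (S ∩ S.image (· + δ')).image (· + δ) with hY
  have hYcard : Y.card = (S ∩ S.image (· + δ')).card :=
    Finset.card_image_of_injective _ (add_left_injective δ)
  have hsub : X ∪ Y ⊆ S.image (· + δ) := by
    intro z hz
    rcases Finset.mem_union.1 hz with h | h
    · exact (Finset.mem_inter.1 h).2
    · obtain ⟨y, hy, rfl⟩ := Finset.mem_image.1 h
      exact Finset.mem_image.2 ⟨y, (Finset.mem_inter.1 hy).1, rfl⟩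
  have hmeet : X ∩ Y ⊆ S ∩ S.image (· + (δ + δ')) := by
    intro z hz
    obtain ⟨hzX, hzY⟩ := Finset.mem_inter.1 hz
    obtain ⟨y, hy, rfl⟩ := Finset.mem_image.1 hzY
    obtain ⟨hyS, hy'⟩ := Finset.mem_inter.1 hy
    obtain ⟨w, hw, hwy⟩ := Finset.mem_image.1 hy'
    refine Finset.mem_inter.2 ⟨(Finset.mem_inter.1 hzX).1, Finset.mem_image.2 ⟨w, hw, by linarith⟩⟩
  have h1 : (X ∪ Y).card ≤ S.card := by
    calc (X ∪ Y).card ≤ (S.image (· + δ)).card := Finset.card_le_card hsub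
    _ = S.card := card_shift S δ
  have h2 : (X ∩ Y).card ≤ (S ∩ S.image (· + (δ + δ'))).card := Finset.card_le_card hmeet
  have h3 := Finset.card_union_add_card_inter X Y
  omega

/-- incidence bound: the overlaps over distinct nonzero shifts sum to at most `|S|² - |S|`. -/
lemma incidence (S E : Finset ℝ) (hE : ∀ e ∈ E, e ≠ 0) :
    ∑ e ∈ E, (S ∩ S.image (· + e)).card ≤ S.card * S.card - S.card := by
  classical
  have key : ∑ e ∈ E, (S ∩ S.image (· + e)).card
      = (E.biUnion (fun e => (S ∩ S.image (· + e)).image (fun x => (x, x - e)))).card := by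
    rw [Finset.card_biUnion]
    · exact Finset.sum_congr rfl fun e _ =>
        (Finset.card_image_of_injOn (fun x _ y _ h => congrArg Prod.fst h)).symm
    · intro e _ f _ hef
      rw [Function.onFun, Finset.disjoint_left]
      rintro p hp hq
      obtain ⟨x, _, rfl⟩ := Finset.mem_image.1 hp
      obtain ⟨y, _, hyq⟩ := Finset.mem_image.1 hq
      apply hef
      have h1 : y = x := congrArg Prod.fst hyq
      have h2 : y - f = x - e := congrArg Prod.snd hyq
      subst h1
      linarith
  rw [key]
  have hsub : (E.biUnion (fun e => (S ∩ S.image (· + e)).image (fun x => (x, x - e))))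
      ⊆ S.offDiag := by
    intro p hp
    obtain ⟨e, he, hpe⟩ := Finset.mem_biUnion.1 hp
    obtain ⟨x, hx, rfl⟩ := Finset.mem_image.1 hpe
    obtain ⟨hxS, hx'⟩ := Finset.mem_inter.1 hx
    obtain ⟨u, hu, hux⟩ := Finset.mem_image.1 hx'
    have hxe : x - e = u := by linarith
    refine Finset.mem_offDiag.2 ⟨hxS, by rw [hxe]; exact hu, ?_⟩
    intro hcontra
    exact hE e he (by linarith [congrArg id hcontra, sub_eq_self.1 (hcontra.symm : x - e = x)])
  calc (E.biUnion _).card ≤ S.offDiag.card := Finset.card_le_card hsub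
  _ = S.card * S.card - S.card := Finset.offDiag_card S

/-- growth: adding a fresh pair to `B` yields at least the two shifted copies of old sums. -/
lemma grow (B : Finset ℝ) (t : ℕ) (a b : ℝ) (ha : a ∉ B) (hb : b ∉ B) (hab : a ≠ b) :
    ((sumsT B t).image (· + a)) ∪ ((sumsT B t).image (· + b))
      ⊆ sumsT (insert a (insert b B)) (t + 1) := by
  intro s hs
  rcases Finset.mem_union.1 hs with h | h
  · obtain ⟨u, hu, rfl⟩ := Finset.mem_image.1 h
    obtain ⟨C, hCB, hCcard, rfl⟩ := mem_sumsT.1 hu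
    have haC : a ∉ C := fun hc => ha (hCB hc)
    refine mem_sumsT.2 ⟨insert a C, ?_, ?_, ?_⟩
    · intro x hx
      rcases Finset.mem_insert.1 hx with rfl | hx
      · exact Finset.mem_insert_self _ _
      · exact Finset.mem_insert_of_mem (Finset.mem_insert_of_mem (hCB hx))
    · rw [Finset.card_insert_of_notMem haC, hCcard]
    · rw [Finset.sum_insert haC]; ring
  · obtain ⟨u, hu, rfl⟩ := Finset.mem_image.1 h
    obtain ⟨C, hCB, hCcard, rfl⟩ := mem_sumsT.1 hu
    have hbC : b ∉ C := fun hc => hb (hCB hc)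
    refine mem_sumsT.2 ⟨insert b C, ?_, ?_, ?_⟩
    · intro x hx
      rcases Finset.mem_insert.1 hx with rfl | hx
      · exact Finset.mem_insert_of_mem (Finset.mem_insert_self _ _)
      · exact Finset.mem_insert_of_mem (Finset.mem_insert_of_mem (hCB hx))
    · rw [Finset.card_insert_of_notMem hbC, hCcard]
    · rw [Finset.sum_insert hbC]; ring

lemma NL2 : ∀ L : ℕ, 9 ≤ L → 128 * L + 119 ≤ 3 * 2 ^ L := by
  intro L hL
  induction L with
  | zero => omega
  | succ n ih =>
    rcases Nat.lt_or_ge n 9 with h | h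
    · interval_cases n <;> simp_all
    · have h1 := ih (by omega)
      have h2 : 512 ≤ 2 ^ n := by
        calc (512 : ℕ) = 2 ^ 9 := by norm_num
        _ ≤ 2 ^ n := Nat.pow_le_pow_right (by norm_num) h
      rw [pow_succ]
      omega

lemma NL3 {t n : ℕ} (hn : 512 ≤ n) (h : ((11 : ℝ) / 10) ^ t < (n : ℝ)) :
    16 * t + 7 ≤ 3 * n := by
  have h2 : (2 : ℝ) ≤ ((11 : ℝ) / 10) ^ 8 := by norm_num
  have hstep : (2 : ℝ) ^ t ≤ (((11 : ℝ) / 10) ^ 8) ^ t :=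
    pow_le_pow_left₀ (by norm_num) h2 t
  have hpow : (((11 : ℝ) / 10) ^ 8) ^ t = (((11 : ℝ) / 10) ^ t) ^ 8 := by
    rw [← pow_mul, ← pow_mul, Nat.mul_comm]
  have hlt : (((11 : ℝ) / 10) ^ t) ^ 8 < (n : ℝ) ^ 8 :=
    pow_lt_pow_left₀ h (by positivity) (by norm_num)
  have hreal : (2 : ℝ) ^ t < (n : ℝ) ^ 8 := by
    calc (2 : ℝ) ^ t ≤ (((11 : ℝ) / 10) ^ 8) ^ t := hstep
    _ = (((11 : ℝ) / 10) ^ t) ^ 8 := hpow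
    _ < (n : ℝ) ^ 8 := hlt
  have hnat : 2 ^ t < n ^ 8 := by exact_mod_cast hreal
  set L := Nat.log 2 n with hLdef
  have hL9 : 9 ≤ L := by
    rw [hLdef]
    exact (Nat.le_log_iff_pow_le (by norm_num) (by omega)).2 (by norm_num; omega)
  have hn2 : n < 2 ^ (L + 1) := Nat.lt_pow_succ_log_self (by norm_num) n
  have h8 : 2 ^ t < 2 ^ (8 * (L + 1)) := by
    calc 2 ^ t < n ^ 8 := hnat
    _ ≤ (2 ^ (L + 1)) ^ 8 := Nat.pow_le_pow_left hn2.le 8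
    _ = 2 ^ (8 * (L + 1)) := by rw [← pow_mul, Nat.mul_comm]
  have ht8 : t < 8 * (L + 1) := (Nat.pow_lt_pow_iff_right (by norm_num)).1 h8
  have h3 := NL2 L hL9
  have h2L : 2 ^ L ≤ n := Nat.pow_log_le_self 2 (by omega)
  omega

/-- Construction of `2m-3` distinct nonzero shifts, each a sum of two differences
of remaining points. -/
lemma exists_E (rem : Finset ℝ) (h3 : 3 ≤ rem.card) :
    ∃ E : Finset ℝ, E.card = 2 * rem.card - 3 ∧
      ∀ e ∈ E, e ≠ 0 ∧ ∃ x y u v : ℝ, x ∈ rem ∧ y ∈ rem ∧ u ∈ rem ∧ v ∈ rem ∧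
        x ≠ y ∧ u ≠ v ∧ e = (y - x) + (v - u) := by
  classical
  have h0 : rem.Nonempty := Finset.card_pos.1 (by omega)
  set r1 := rem.min' h0 with hr1def
  set R := rem.max' h0 with hRdef
  have hr1 : r1 ∈ rem := rem.min'_mem h0
  have hR : R ∈ rem := rem.max'_mem h0
  set rem' := rem.erase r1 with hrem'def
  have hcard' : rem'.card = rem.card - 1 := Finset.card_erase_of_mem hr1
  have h0' : rem'.Nonempty := Finset.card_pos.1 (by omega)
  set r2 := rem'.min' h0' with hr2def
  have hr2' : r2 ∈ rem' := rem'.min'_mem h0'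
  have hr2 : r2 ∈ rem := Finset.mem_of_mem_erase hr2'
  have hr2ne : r2 ≠ r1 := Finset.ne_of_mem_erase hr2'
  have hr12 : r1 < r2 := lt_of_le_of_ne (rem.min'_le r2 hr2) (Ne.symm hr2ne)
  have h1R : r1 < R := Finset.min'_lt_max'_of_card rem (by omega)
  set rem'' := rem'.erase r2 with hrem''def
  have hcard'' : rem''.card = rem.card - 2 := by
    rw [hrem''def, Finset.card_erase_of_mem hr2', hcard']
    omega
  set E1 := rem'.image (fun x => (x - r1) + (r2 - r1)) with hE1def
  set E2 := rem''.image (fun x => (x - r1) + (R - r1)) with hE2def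
  have hc1 : E1.card = rem.card - 1 := by
    rw [hE1def, Finset.card_image_of_injOn (fun x _ y _ h => by linarith), hcard']
  have hc2 : E2.card = rem.card - 2 := by
    rw [hE2def, Finset.card_image_of_injOn (fun x _ y _ h => by linarith), hcard'']
  have hmemrem' : ∀ x ∈ rem', x ∈ rem ∧ r1 < x := by
    intro x hx
    have h1 : x ∈ rem := Finset.mem_of_mem_erase hx
    exact ⟨h1, lt_of_le_of_ne (rem.min'_le x h1) (Ne.symm (Finset.ne_of_mem_erase hx))⟩
  have hmemrem'' : ∀ y ∈ rem'', y ∈ rem ∧ r2 < y := by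
    intro y hy
    have h1 : y ∈ rem' := Finset.mem_of_mem_erase hy
    exact ⟨(hmemrem' y h1).1,
      lt_of_le_of_ne (rem'.min'_le y h1) (Ne.symm (Finset.ne_of_mem_erase hy))⟩
  have hdisj : Disjoint E1 E2 := by
    rw [Finset.disjoint_left]
    rintro e he1 he2
    obtain ⟨x, hx, rfl⟩ := Finset.mem_image.1 he1
    obtain ⟨y, hy, heq⟩ := Finset.mem_image.1 he2
    have hxR : x ≤ R := rem.le_max' x (hmemrem' x hx).1
    have hy2 : r2 < y := (hmemrem'' y hy).2
    linarith
  refine ⟨E1 ∪ E2, ?_, ?_⟩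
  · rw [Finset.card_union_of_disjoint hdisj, hc1, hc2]; omega
  · intro e he
    rcases Finset.mem_union.1 he with h | h
    · obtain ⟨x, hx, rfl⟩ := Finset.mem_image.1 h
      obtain ⟨hxrem, hx1⟩ := hmemrem' x hx
      refine ⟨ne_of_gt (by linarith), r1, x, r1, r2, hr1, hxrem, hr1, hr2, ?_, ?_, rfl⟩
      · exact fun hc => (lt_irrefl r1 (hc ▸ hx1))
      · exact fun hc => (lt_irrefl r1 (hc ▸ hr12))
    · obtain ⟨y, hy, rfl⟩ := Finset.mem_image.1 h
      obtain ⟨hyrem, hy2⟩ := hmemrem'' y hy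
      have hy1 : r1 < y := lt_trans hr12 hy2
      refine ⟨ne_of_gt (by linarith), r1, y, r1, R, hr1, hyrem, hr1, hR, ?_, ?_, rfl⟩
      · exact fun hc => (lt_irrefl r1 (hc ▸ hy1))
      · exact fun hc => (lt_irrefl r1 (hc ▸ h1R))

/-- Main induction: at each stage either we are done, or we have a `2t`-element subset
whose `t`-element sums number at least `(11/10)^t`. -/
lemma main_ind (A : Finset ℝ) (hA : 512 ≤ A.card) (t : ℕ) :
    (∃ B : Finset ℝ, B ⊆ A ∧ ∃ T : ℕ, T ≤ t ∧ B.card = 2 * T ∧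
        A.card ≤ (sumsT B T).card)
    ∨ (∃ B : Finset ℝ, B ⊆ A ∧ B.card = 2 * t ∧
        ((11 : ℝ) / 10) ^ t ≤ ((sumsT B t).card : ℝ)) := by
  classical
  induction t with
  | zero =>
    right
    refine ⟨∅, Finset.empty_subset A, by simp, ?_⟩
    have : sumsT ∅ 0 = {0} := by
      unfold sumsT
      rw [Finset.powersetCard_zero]
      simp
    rw [this]
    simp
  | succ t ih =>
    rcases ih with ⟨B, hBA, T, hT, hBcard, hdone⟩ | ⟨B, hBA, hBcard, hS⟩
    · exact Or.inl ⟨B, hBA, T, hT.trans (Nat.le_succ t), hBcard, hdone⟩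
    · set S := sumsT B t with hSdef
      set k := S.card with hkdef
      by_cases hbig : A.card ≤ k
      · exact Or.inl ⟨B, hBA, t, Nat.le_succ t, hBcard, hbig⟩
      push_neg at hbig
      have hkR : ((11 : ℝ) / 10) ^ t < (A.card : ℝ) :=
        lt_of_le_of_lt hS (by exact_mod_cast hbig)
      have ht3 : 16 * t + 7 ≤ 3 * A.card := NL3 hA hkR
      have h2t : 2 * t ≤ A.card := hBcard ▸ Finset.card_le_card hBA
      set rem := A \ B with hremdef
      have hremcard : rem.card = A.card - 2 * t := by
        rw [hremdef, Finset.card_sdiff_of_subset hBA, hBcard]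
      have hknz : 1 ≤ k := by
        rw [hkdef, hSdef]
        apply Finset.card_pos.2
        apply Finset.Nonempty.image
        exact Finset.powersetCard_nonempty.2 (by omega)
      by_cases hgood : ∃ a ∈ rem, ∃ b ∈ rem, a ≠ b ∧
          10 * ((S ∩ S.image (· + (b - a))).card) ≤ 9 * k
      · right
        obtain ⟨a, ha, b, hb, hab, hov⟩ := hgood
        have haB : a ∉ B := (Finset.mem_sdiff.1 ha).2
        have hbB : b ∉ B := (Finset.mem_sdiff.1 hb).2
        have haA : a ∈ A := (Finset.mem_sdiff.1 ha).1
        have hbA : b ∈ A := (Finset.mem_sdiff.1 hb).1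
        refine ⟨insert a (insert b B), ?_, ?_, ?_⟩
        · intro x hx
          rcases Finset.mem_insert.1 hx with rfl | hx
          · exact haA
          rcases Finset.mem_insert.1 hx with rfl | hx
          · exact hbA
          · exact hBA hx
        · rw [Finset.card_insert_of_notMem, Finset.card_insert_of_notMem hbB, hBcard]
          · ring
          · intro hc
            rcases Finset.mem_insert.1 hc with h | h
            · exact hab h
            · exact haB h
        · -- growth bound
          have hsub := grow B t a b haB hbB hab
          set X := S.image (· + a) with hXdef
          set Y := S.image (· + b) with hYdef
          have hXY : (X ∪ Y).card + (X ∩ Y).card = k + k := by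
            rw [Finset.card_union_add_card_inter, hXdef, hYdef, card_shift, card_shift]
          have hinter : (X ∩ Y).card = (S ∩ S.image (· + (b - a))).card := by
            rw [hXdef, hYdef, Finset.inter_comm, inter_shift S b a]
            exact Finset.card_image_of_injective _ (add_left_injective a)
          have hXYsub : (X ∪ Y).card ≤ (sumsT (insert a (insert b B)) (t + 1)).card :=
            Finset.card_le_card hsub
          have hnat : 11 * k ≤ 10 * (sumsT (insert a (insert b B)) (t + 1)).card := by omega
          have hcast : (11 : ℝ) * k ≤ 10 * ((sumsT (insert a (insert b B)) (t + 1)).card : ℝ) := by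
            exact_mod_cast hnat
          rw [pow_succ]
          calc ((11 : ℝ) / 10) ^ t * (11 / 10) ≤ (k : ℝ) * (11 / 10) := by
                apply mul_le_mul_of_nonneg_right hS (by norm_num)
          _ ≤ ((sumsT (insert a (insert b B)) (t + 1)).card : ℝ) := by linarith
      · -- stall: all shifts are near-periods; conclude k ≥ |A| already.
        left
        push_neg at hgood
        have hm3 : 3 ≤ rem.card := by omega
        obtain ⟨E, hEcard, hEprop⟩ := exists_E rem hm3
        have hEbound : ∀ e ∈ E, 8 * k < 10 * ((S ∩ S.image (· + e)).card) := by
          intro e he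
          obtain ⟨hne, x, y, u, v, hx, hy, hu, hv, hxy, huv, rfl⟩ := hEprop e he
          have h1 := hgood x hx y hy hxy
          have h2 := hgood u hu v hv huv
          have h3 := comp_lemma S (y - x) (v - u)
          omega
        have hsum := incidence S E (fun e he => (hEprop e he).1)
        rw [← hkdef] at hsum
        have hEne : E.Nonempty := Finset.card_pos.1 (by omega)
        have hlt : E.card * (8 * k) < ∑ e ∈ E, 10 * ((S ∩ S.image (· + e)).card) := by
          calc E.card * (8 * k) = ∑ _e ∈ E, 8 * k := by
                rw [Finset.sum_const, smul_eq_mul]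
          _ < ∑ e ∈ E, 10 * ((S ∩ S.image (· + e)).card) :=
                Finset.sum_lt_sum_of_nonempty hEne hEbound
        have h10 : ∑ e ∈ E, 10 * ((S ∩ S.image (· + e)).card)
            = 10 * ∑ e ∈ E, ((S ∩ S.image (· + e)).card) := by
          rw [Finset.mul_sum]
        have hkk : k * k - k = k * (k - 1) := by
          have := Nat.mul_pred k k
          simpa [Nat.pred_eq_sub_one] using this.symm
        have hfinal : E.card * (8 * k) < 10 * (k * (k - 1)) := by
          calc E.card * (8 * k) < ∑ e ∈ E, 10 * ((S ∩ S.image (· + e)).card) := hlt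
          _ = 10 * ∑ e ∈ E, ((S ∩ S.image (· + e)).card) := h10
          _ ≤ 10 * (k * k - k) := by omega
          _ = 10 * (k * (k - 1)) := by rw [hkk]
        have hcancel : 8 * E.card < 10 * (k - 1) := by
          have hform : k * (8 * E.card) < k * (10 * (k - 1)) := by
            calc k * (8 * E.card) = E.card * (8 * k) := by ring
            _ < 10 * (k * (k - 1)) := hfinal
            _ = k * (10 * (k - 1)) := by ring
          exact Nat.lt_of_mul_lt_mul_left hform
        refine ⟨B, hBA, t, Nat.le_succ t, hBcard, ?_⟩
        omega

end SmallSetBigSums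

theorem small_set_with_big_sums :
    ∃ N₀ : ℕ, ∀ A : Finset ℝ, N₀ ≤ A.card →
      ∃ (B : Finset ℝ) (T : ℕ), B ⊆ A ∧ B.card = 2 * T ∧
        ((2 * T : ℕ) : ℝ) ≤ 20 * Real.logb 2 A.card ∧
        A.card ≤ (distinctSumR (↑B) T).ncard := by
  classical
  refine ⟨512, fun A hA => ?_⟩
  have hcard1 : (1 : ℝ) < (A.card : ℝ) := by exact_mod_cast (by omega : 1 < A.card)
  have hex : ∃ t : ℕ, (A.card : ℝ) ≤ ((11 : ℝ) / 10) ^ t := by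
    obtain ⟨t, ht⟩ := pow_unbounded_of_one_lt (A.card : ℝ) (by norm_num : (1 : ℝ) < 11 / 10)
    exact ⟨t, ht.le⟩
  set t' := Nat.find hex with ht'def
  have hfind : (A.card : ℝ) ≤ ((11 : ℝ) / 10) ^ t' := Nat.find_spec hex
  -- obtain B, T with T ≤ t', B.card = 2T, A.card ≤ |sums|
  have hmain : ∃ B : Finset ℝ, B ⊆ A ∧ ∃ T : ℕ, T ≤ t' ∧ B.card = 2 * T ∧
      A.card ≤ (SmallSetBigSums.sumsT B T).card := by
    rcases SmallSetBigSums.main_ind A hA t' with ⟨B, hBA, T, hT, hBc, hge⟩ | ⟨B, hBA, hBc, hge⟩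
    · exact ⟨B, hBA, T, hT, hBc, hge⟩
    · refine ⟨B, hBA, t', le_refl _, hBc, ?_⟩
      have : (A.card : ℝ) ≤ ((SmallSetBigSums.sumsT B t').card : ℝ) := le_trans hfind hge
      exact_mod_cast this
  obtain ⟨B, hBA, T, hT, hBc, hge⟩ := hmain
  have ht'pos : 1 ≤ t' := by
    by_contra hc
    push_neg at hc
    interval_cases t'
    · simp at hfind; linarith
  have hmin : ¬ ((A.card : ℝ) ≤ ((11 : ℝ) / 10) ^ (t' - 1)) := Nat.find_min hex (by omega)
  push_neg at hmin
  -- 2^(t'-1) < A.card^8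
  have h2 : (2 : ℝ) ≤ ((11 : ℝ) / 10) ^ 8 := by norm_num
  have hstep : (2 : ℝ) ^ (t' - 1) ≤ (((11 : ℝ) / 10) ^ 8) ^ (t' - 1) :=
    pow_le_pow_left₀ (by norm_num) h2 _
  have hpow : (((11 : ℝ) / 10) ^ 8) ^ (t' - 1) = (((11 : ℝ) / 10) ^ (t' - 1)) ^ 8 := by
    rw [← pow_mul, ← pow_mul, Nat.mul_comm]
  have hlt8 : (((11 : ℝ) / 10) ^ (t' - 1)) ^ 8 < (A.card : ℝ) ^ 8 :=
    pow_lt_pow_left₀ hmin (by positivity) (by norm_num)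
  have h2t8 : (2 : ℝ) ^ (t' - 1) < (A.card : ℝ) ^ 8 := by
    calc (2 : ℝ) ^ (t' - 1) ≤ (((11 : ℝ) / 10) ^ 8) ^ (t' - 1) := hstep
    _ = (((11 : ℝ) / 10) ^ (t' - 1)) ^ 8 := hpow
    _ < (A.card : ℝ) ^ 8 := hlt8
  have h2t9 : (2 : ℝ) ^ t' < (A.card : ℝ) ^ 9 := by
    have hts : t' = (t' - 1) + 1 := by omega
    have h2A : (2 : ℝ) ≤ (A.card : ℝ) := by exact_mod_cast (by omega : 2 ≤ A.card)
    calc (2 : ℝ) ^ t' = 2 ^ ((t' - 1) + 1) := by rw [← hts]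
    _ = 2 * 2 ^ (t' - 1) := by rw [pow_succ]; ring
    _ < 2 * (A.card : ℝ) ^ 8 := by
        have : (0 : ℝ) < 2 := by norm_num
        nlinarith [h2t8]
    _ ≤ (A.card : ℝ) * (A.card : ℝ) ^ 8 := by
        apply mul_le_mul_of_nonneg_right h2A (pow_nonneg (Nat.cast_nonneg _) 8)
    _ = (A.card : ℝ) ^ 9 := by ring
  have hlogb : (t' : ℝ) < 9 * Real.logb 2 (A.card : ℝ) := by
    have h1 : Real.logb 2 ((2 : ℝ) ^ t') = (t' : ℝ) := by
      rw [Real.logb_pow, Real.logb_self_eq_one (by norm_num : (1:ℝ) < 2)]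
      ring
    have h2' : Real.logb 2 ((A.card : ℝ) ^ 9) = 9 * Real.logb 2 (A.card : ℝ) := by
      rw [Real.logb_pow]; norm_num
    have h3 : Real.logb 2 ((2 : ℝ) ^ t') < Real.logb 2 ((A.card : ℝ) ^ 9) := by
      apply Real.logb_lt_logb (by norm_num : (1:ℝ) < 2) (by positivity) h2t9
    rw [h1, h2'] at h3
    exact h3
  have hlogbnn : 0 ≤ Real.logb 2 (A.card : ℝ) :=
    Real.logb_nonneg (by norm_num) (by linarith)
  refine ⟨B, T, hBA, hBc, ?_, ?_⟩
  · have hTt : (T : ℝ) ≤ (t' : ℝ) := by exact_mod_cast hT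
    push_cast
    calc (2 : ℝ) * T ≤ 2 * t' := by linarith
    _ ≤ 18 * Real.logb 2 (A.card : ℝ) := by linarith
    _ ≤ 20 * Real.logb 2 (A.card : ℝ) := by linarith
  · rw [SmallSetBigSums.distinctSumR_coe, Set.ncard_coe_finset]
    exact hge
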